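/- For any integer m ≥ 2, the chromatic number of G_2(2m) is at most the chromatic number of G_2(m) plus 2. -/

import Mathlib

/-- Vertex set of `G₂(n)`: triples `(x, y, z)` with `1 ≤ x ≤ y ≤ z ≤ n` and `x < z`. -/
def V2 (n : ℕ) :=
  {p : ℕ × ℕ × ℕ // 1 ≤ p.1 ∧ p.1 ≤ p.2.1 ∧ p.2.1 ≤ p.2.2 ∧ p.2.2 ≤ n ∧ p.1 < p.2.2}

/-- `rel2 (x,y,z) (x',y',z')` holds iff `x < x' ≤ z < z'`, `y ≤ x'` and `z ≤ y'`. -/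
def rel2 (p q : ℕ × ℕ × ℕ) : Prop :=
  p.1 < q.1 ∧ q.1 ≤ p.2.2 ∧ p.2.2 < q.2.2 ∧ p.2.1 ≤ q.1 ∧ p.2.2 ≤ q.2.1

/-- The graph `G₂(n)`. -/
def G2 (n : ℕ) : SimpleGraph (V2 n) where
  Adj a b := rel2 a.1 b.1 ∨ rel2 b.1 a.1
  symm := ⟨fun a b h => h.symm⟩
  loopless := ⟨fun a h => by rcases h with h | h <;> exact lt_irrefl _ h.1⟩

/-- A vertex of `G₂(2m)` with `z ≤ m` is a vertex of `G₂(m)`. -/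
def lowMem {m : ℕ} (p : V2 (2 * m)) (h : p.1.2.2 ≤ m) : V2 m :=
  ⟨p.1, by obtain ⟨a, b, c, d, e⟩ := p.2; exact ⟨a, b, c, h, e⟩⟩

/-- A vertex of `G₂(2m)` with `m < x` shifts down to a vertex of `G₂(m)`. -/
def highMem {m : ℕ} (p : V2 (2 * m)) (h : m < p.1.1) : V2 m :=
  ⟨(p.1.1 - m, p.1.2.1 - m, p.1.2.2 - m), by
    obtain ⟨a, b, c, d, e⟩ := p.2
    refine ⟨?_, ?_, ?_, ?_, ?_⟩ <;> simp <;> omega⟩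

/-- The coloring of `G₂(2m)` built from a coloring of `G₂(m)` plus 2 extra colors. -/
def col {m k : ℕ} (C : (G2 m).Coloring (Fin k)) (p : V2 (2 * m)) : Fin k ⊕ Bool :=
  if h1 : p.1.2.2 ≤ m then Sum.inl (C (lowMem p h1))
  else if h2 : m < p.1.1 then Sum.inl (C (highMem p h2))
  else Sum.inr (decide (p.1.2.1 ≤ m))

lemma col_key {m k : ℕ} (C : (G2 m).Coloring (Fin k)) (a b : V2 (2 * m))
    (hab : rel2 a.1 b.1) : col C a ≠ col C b := by
  obtain ⟨h1, h2, h3, h4, h5⟩ := hab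
  unfold col
  by_cases ha1 : a.1.2.2 ≤ m
  · by_cases hb1 : b.1.2.2 ≤ m
    · simp only [dif_pos ha1, dif_pos hb1]
      intro heq
      exact C.valid (Or.inl ⟨h1, h2, h3, h4, h5⟩ :
        (G2 m).Adj (lowMem a ha1) (lowMem b hb1)) (Sum.inl.inj heq)
    · have hb2 : ¬ m < b.1.1 := by omega
      simp [dif_pos ha1, dif_neg hb1, dif_neg hb2]
  · have hb1 : ¬ b.1.2.2 ≤ m := by omega
    by_cases ha2 : m < a.1.1
    · have hb2 : m < b.1.1 := lt_trans ha2 h1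
      simp only [dif_neg ha1, dif_neg hb1, dif_pos ha2, dif_pos hb2]
      intro heq
      have hay : m < a.1.2.1 := lt_of_lt_of_le ha2 a.2.2.1
      refine C.valid (Or.inl ?_ : (G2 m).Adj (highMem a ha2) (highMem b hb2))
        (Sum.inl.inj heq)
      refine ⟨?_, ?_, ?_, ?_, ?_⟩ <;> simp [highMem] <;> omega
    · by_cases hb2 : m < b.1.1
      · simp [dif_neg ha1, dif_neg hb1, dif_neg ha2, dif_pos hb2]
      · simp only [dif_neg ha1, dif_neg hb1, dif_neg ha2, dif_neg hb2]
        have hay : a.1.2.1 ≤ m := le_trans h4 (by omega)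
        have hby : ¬ b.1.2.1 ≤ m := by omega
        simp [hay, hby]

lemma colorable_step (m k : ℕ) (h : (G2 m).Colorable k) :
    (G2 (2 * m)).Colorable (k + 2) := by
  obtain ⟨C⟩ := h
  have C2 : (G2 (2 * m)).Coloring (Fin k ⊕ Bool) :=
    SimpleGraph.Coloring.mk (col C) (by
      intro a b hadj
      rcases hadj with h | h
      · exact col_key C a b h
      · exact (col_key C b a h).symm)
  have := C2.colorable
  simpa using this

theorem stmt_9 (m : ℕ) (hm : 2 ≤ m) :
    (G2 (2 * m)).chromaticNumber ≤ (G2 m).chromaticNumber + 2 := by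
  rcases eq_or_ne ((G2 m).chromaticNumber) ⊤ with h | h
  · rw [h]; simp
  · have hc := (G2 m).colorable_of_chromaticNumber_ne_top h
    have h2 := colorable_step m _ hc
    have := (SimpleGraph.chromaticNumber_le_iff_colorable).2 h2
    calc (G2 (2 * m)).chromaticNumber
        ≤ ((ENat.toNat (G2 m).chromaticNumber + 2 : ℕ) : ℕ∞) := this
      _ = (G2 m).chromaticNumber + 2 := by
          push_cast
          rw [ENat.coe_toNat h]
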